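/- Suppose X is a Polish space, (R_n)_{n∈ℕ} is a sequence of F_σ subsets of X × X, Γ is a group of homeomorphisms of X, and O ⊆ X is an orbit of Γ with the property that for every n ∈ ℕ and every open set U ⊆ X intersecting O, there are distinct points x, y ∈ O ∩ U such that O ∩ {z : (x,z) ∈ R_n} ∩ {z : (y,z) ∈ R_n} = ∅. Then for each n the set (X × X \ R_n) ∩ (closure(O) × closure(O)) is dense in closure(O) × closure(O); consequently (⋃_{n∈ℕ} R_n) ∩ (closure(O) × closure(O)) is meager in the subspace closure(O) × closure(O). -/
import Mathlib


/-- A group of homeomorphisms of `X`: a subgroup of the group of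
self-homeomorphisms of `X` under composition. -/
def IsHomeoGroup {X : Type*} [TopologicalSpace X] (Γ : Set (X ≃ₜ X)) : Prop :=
  Homeomorph.refl X ∈ Γ ∧ (∀ γ ∈ Γ, γ.symm ∈ Γ) ∧
    ∀ γ₁ ∈ Γ, ∀ γ₂ ∈ Γ, γ₁.trans γ₂ ∈ Γ

/-- under the hypotheses of Theorem `embedding`, each
`∼ Rₙ` is dense in `closure O × closure O`, and hence `⋃ₙ Rₙ` is meager in the
subspace `closure O × closure O`. -/
theorem stmt_8 {X : Type*} [TopologicalSpace X] [PolishSpace X]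
    (R : ℕ → Set (X × X))
    (hR : ∀ n : ℕ, ∃ F : ℕ → Set (X × X), (∀ k, IsClosed (F k)) ∧ R n = ⋃ k, F k)
    (Γ : Set (X ≃ₜ X)) (hΓ : IsHomeoGroup Γ)
    (O : Set X) (hO : ∃ x₀ : X, O = {y : X | ∃ γ ∈ Γ, γ x₀ = y})
    (hsep : ∀ (n : ℕ) (U : Set X), IsOpen U → (O ∩ U).Nonempty →
      ∃ x ∈ O ∩ U, ∃ y ∈ O ∩ U, x ≠ y ∧
        O ∩ {z : X | (x, z) ∈ R n} ∩ {z : X | (y, z) ∈ R n} = ∅) :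
    (∀ n : ℕ,
      Dense {p : ↥(closure O) × ↥(closure O) | ((p.1 : X), (p.2 : X)) ∉ R n}) ∧
    IsMeagre {p : ↥(closure O) × ↥(closure O) | ((p.1 : X), (p.2 : X)) ∈ ⋃ n, R n} := by
  have hdense : ∀ n : ℕ,
      Dense {p : ↥(closure O) × ↥(closure O) | ((p.1 : X), (p.2 : X)) ∉ R n} := by
    intro n
    rw [dense_iff_inter_open]
    rintro t ht ⟨p, hp⟩
    obtain ⟨s₁, s₂, hs₁, hs₂, hp₁, hp₂, hsub⟩ := isOpen_prod_iff.mp ht p.1 p.2 hp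
    obtain ⟨U, hU, hUs⟩ := isOpen_induced_iff.mp hs₁
    obtain ⟨V, hV, hVs⟩ := isOpen_induced_iff.mp hs₂
    have hUO : (O ∩ U).Nonempty := by
      have h1 : (p.1 : X) ∈ closure O := p.1.2
      rw [mem_closure_iff] at h1
      obtain ⟨w, hwU, hwO⟩ := h1 U hU (by rw [← hUs] at hp₁; exact hp₁)
      exact ⟨w, hwO, hwU⟩
    have hVO : (O ∩ V).Nonempty := by
      have h2 : (p.2 : X) ∈ closure O := p.2.2
      rw [mem_closure_iff] at h2
      obtain ⟨w, hwV, hwO⟩ := h2 V hV (by rw [← hVs] at hp₂; exact hp₂)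
      exact ⟨w, hwO, hwV⟩
    obtain ⟨z, hzO, hzV⟩ := hVO
    obtain ⟨x, ⟨hxO, hxU⟩, y, ⟨hyO, hyU⟩, hxy, hemp⟩ := hsep n U hU hUO
    have hcase : (x, z) ∉ R n ∨ (y, z) ∉ R n := by
      by_contra h
      push_neg at h
      exact Set.eq_empty_iff_forall_notMem.mp hemp z ⟨⟨hzO, h.1⟩, h.2⟩
    rcases hcase with h | h
    · refine ⟨(⟨x, subset_closure hxO⟩, ⟨z, subset_closure hzO⟩),
        hsub ⟨?_, ?_⟩, h⟩
      · rw [← hUs]; exact hxU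
      · rw [← hVs]; exact hzV
    · refine ⟨(⟨y, subset_closure hyO⟩, ⟨z, subset_closure hzO⟩),
        hsub ⟨?_, ?_⟩, h⟩
      · rw [← hUs]; exact hyU
      · rw [← hVs]; exact hzV
  refine ⟨hdense, ?_⟩
  choose F hFc hFeq using hR
  have hcont : Continuous fun p : ↥(closure O) × ↥(closure O) => ((p.1 : X), (p.2 : X)) :=
    (continuous_subtype_val.comp continuous_fst).prodMk
      (continuous_subtype_val.comp continuous_snd)
  have hset : {p : ↥(closure O) × ↥(closure O) | ((p.1 : X), (p.2 : X)) ∈ ⋃ n, R n} =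
      ⋃ n, ⋃ k, {p : ↥(closure O) × ↥(closure O) | ((p.1 : X), (p.2 : X)) ∈ F n k} := by
    ext p
    simp only [Set.mem_setOf_eq, Set.mem_iUnion]
    constructor
    · rintro ⟨n, hn⟩
      rw [hFeq n] at hn
      obtain ⟨k, hk⟩ := Set.mem_iUnion.mp hn
      exact ⟨n, k, hk⟩
    · rintro ⟨n, k, hk⟩
      exact ⟨n, by rw [hFeq n]; exact Set.mem_iUnion.mpr ⟨k, hk⟩⟩
  rw [hset]
  refine isMeagre_iUnion fun n => isMeagre_iUnion fun k => ?_
  have hclosed : IsClosed {p : ↥(closure O) × ↥(closure O) | ((p.1 : X), (p.2 : X)) ∈ F n k} :=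
    (hFc n k).preimage hcont
  have hdc : Dense {p : ↥(closure O) × ↥(closure O) | ((p.1 : X), (p.2 : X)) ∈ F n k}ᶜ := by
    refine (hdense n).mono fun p (hp : _ ∉ R n) (hpF : _ ∈ F n k) =>
      hp (by rw [hFeq n]; exact Set.mem_iUnion.mpr ⟨k, hpF⟩)
  exact residual_of_dense_open hclosed.isOpen_compl hdc
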